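/- For every ε > 0, every λ₁,…,λ_n ∈ ℝ, and every s₁ ∈ ℝ, there exist s₂ > s₁ and w ∈ ℝⁿ with ‖w‖ ≤ ε such that for each i = 1,…,n one has λ_i s₂ ≡ w_i (mod 2π), i.e. there exists m_i ∈ ℤ with λ_i s₂ = w_i + 2π m_i. -/

import Mathlib

/-- For every `ε > 0`, reals `λ₁,…,λ_n` and `s₁ ∈ ℝ`, there exist `s₂ > s₁` and
`w ∈ ℝⁿ` with `‖w‖ ≤ ε` (Euclidean norm) such that `λ_i s₂ ≡ w_i (mod 2π)` for
every `i`. -/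
theorem recurrence_mod_two_pi
    (n : ℕ) (ε : ℝ) (hε : 0 < ε) (lam : Fin n → ℝ) (s₁ : ℝ) :
    ∃ s₂ : ℝ, s₁ < s₂ ∧ ∃ w : EuclideanSpace ℝ (Fin n), ‖w‖ ≤ ε ∧
      ∀ i : Fin n, ∃ m : ℤ, lam i * s₂ = w i + 2 * Real.pi * m := by
  have hπ : (0:ℝ) < Real.pi := Real.pi_pos
  -- parameters
  set K : ℕ := ⌈2 * Real.pi * (n + 1) / ε⌉₊ + 1 with hK
  have hK0 : (0:ℝ) < K := by positivity
  have hKge : 2 * Real.pi * (n + 1) / ε ≤ K := by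
    have h1 := Nat.le_ceil (2 * Real.pi * ((n:ℝ) + 1) / ε)
    have h2 : ((⌈2 * Real.pi * ((n:ℝ) + 1) / ε⌉₊ : ℝ)) ≤ (K:ℝ) := by
      rw [hK]; push_cast; linarith
    linarith
  set M : ℕ := ⌈s₁⌉₊ + 1 with hM
  have hMs : s₁ < M := by
    calc s₁ ≤ ⌈s₁⌉₊ := Nat.le_ceil _
    _ < M := by exact_mod_cast Nat.lt_succ_self _
  -- cell map
  set a : ℕ → Fin n → ℝ := fun k i => (k * M * lam i) / (2 * Real.pi) with ha
  set c : ℕ → Fin n → ℤ := fun k i => ⌊Int.fract (a k i) * K⌋ with hc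
  have hc_nonneg : ∀ k i, 0 ≤ c k i := fun k i =>
    Int.floor_nonneg.2 (mul_nonneg (Int.fract_nonneg _) hK0.le)
  have hc_lt : ∀ k i, c k i < K := fun k i => by
    have h1 : Int.fract (a k i) * K < 1 * K :=
      mul_lt_mul_of_pos_right (Int.fract_lt_one _) hK0
    have h2 : Int.fract (a k i) * K < (K:ℝ) := by linarith
    exact_mod_cast Int.floor_lt.2 (by exact_mod_cast h2)
  -- pigeonhole: two indices with the same cell
  set g : Fin (Fintype.card (Fin n → Fin K) + 1) → (Fin n → Fin K) :=
    fun k i => ⟨(c k i).toNat, by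
      have h1 := hc_lt k i
      have h0 := hc_nonneg k i
      omega⟩ with hg
  obtain ⟨x, y, hxy, hgxy⟩ := Fintype.exists_ne_map_eq_of_card_lt g (by simp)
  have key : ∃ j l : ℕ, j < l ∧ ∀ i, c j i = c l i := by
    have hcval : ∀ i, c x i = c y i := by
      intro i
      have h1 : (c x i).toNat = (c y i).toNat := congrArg Fin.val (congrFun hgxy i)
      have h2 := hc_nonneg x i
      have h3 := hc_nonneg y i
      omega
    rcases lt_or_gt_of_ne (fun h : (x:ℕ) = (y:ℕ) => hxy (Fin.ext h)) with h | h
    · exact ⟨x, y, h, hcval⟩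
    · exact ⟨y, x, h, fun i => (hcval i).symm⟩
  obtain ⟨j, l, hjl, hcell⟩ := key
  -- define s₂ and w
  refine ⟨((l - j) * M : ℕ), ?_, ?_⟩
  · have h1 : (M:ℝ) ≤ ((l - j) * M : ℕ) := by
      have h2 : 1 * M ≤ (l - j) * M := Nat.mul_le_mul_right M (by omega)
      exact_mod_cast (by simpa using h2)
    linarith
  · set w : EuclideanSpace ℝ (Fin n) :=
      WithLp.toLp 2 (fun i => 2 * Real.pi * (Int.fract (a l i) - Int.fract (a j i))) with hw
    have hwi : ∀ i, |w i| ≤ ε / (n + 1) := by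
      intro i
      have hfl : ⌊Int.fract (a j i) * K⌋ = ⌊Int.fract (a l i) * K⌋ := hcell i
      have h1 : |Int.fract (a j i) * K - Int.fract (a l i) * K| < 1 :=
        Int.abs_sub_lt_one_of_floor_eq_floor hfl
      have h2 : |Int.fract (a l i) - Int.fract (a j i)| * K < 1 := by
        rw [abs_sub_comm] at h1
        calc |Int.fract (a l i) - Int.fract (a j i)| * K
            = |(Int.fract (a l i) - Int.fract (a j i)) * K| := by
              rw [abs_mul, abs_of_nonneg hK0.le]
          _ = |Int.fract (a l i) * K - Int.fract (a j i) * K| := by ring_nf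
          _ < 1 := h1
      have h3 : |w i| < 2 * Real.pi / K := by
        rw [hw]
        simp only
        rw [abs_mul, abs_of_nonneg (by positivity : (0:ℝ) ≤ 2 * Real.pi)]
        rw [lt_div_iff₀ hK0]
        calc 2 * Real.pi * |Int.fract (a l i) - Int.fract (a j i)| * K
            = 2 * Real.pi * (|Int.fract (a l i) - Int.fract (a j i)| * K) := by ring
          _ < 2 * Real.pi * 1 := mul_lt_mul_of_pos_left h2 (by positivity)
          _ = 2 * Real.pi := by ring
      have h4 : 2 * Real.pi / K ≤ ε / (n + 1) := by
        rw [div_le_div_iff₀ hK0 (by positivity)]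
        have h5 := (div_le_iff₀ hε).1 hKge
        nlinarith
      linarith
    refine ⟨w, ?_, ?_⟩
    · -- norm bound
      rw [EuclideanSpace.norm_eq]
      have hsum : (∑ i, ‖w i‖ ^ 2) ≤ ∑ _i : Fin n, (ε / (n + 1)) ^ 2 := by
        apply Finset.sum_le_sum
        intro i _
        have h5 := hwi i
        rw [Real.norm_eq_abs]
        have h6 : (0:ℝ) ≤ |w i| := abs_nonneg _
        nlinarith
      have hsum2 : (∑ _i : Fin n, (ε / (n + 1)) ^ 2 : ℝ) = n * (ε / (n + 1)) ^ 2 := by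
        simp [Finset.sum_const, mul_comm]
      have hb : (n:ℝ) * (ε / (n + 1)) ^ 2 ≤ ε ^ 2 := by
        have hn : (0:ℝ) < ((n:ℝ) + 1) ^ 2 := by positivity
        have h1 : (n:ℝ) * (ε / (n + 1)) ^ 2 = (n:ℝ) * ε ^ 2 / ((n:ℝ) + 1) ^ 2 := by
          field_simp
        rw [h1, div_le_iff₀ hn]
        have h2 : (n:ℝ) ≤ ((n:ℝ) + 1) ^ 2 := by nlinarith [Nat.cast_nonneg (α := ℝ) n]
        nlinarith [mul_le_mul_of_nonneg_left h2 (sq_nonneg ε)]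
      calc Real.sqrt (∑ i, ‖w i‖ ^ 2) ≤ Real.sqrt (ε ^ 2) := by
            apply Real.sqrt_le_sqrt; rw [hsum2] at hsum; linarith
        _ = ε := Real.sqrt_sq hε.le
    · -- congruence
      intro i
      refine ⟨⌊a l i⌋ - ⌊a j i⌋, ?_⟩
      have hal : ((l:ℝ) * M * lam i) = (2 * Real.pi) * a l i := by
        rw [ha]; field_simp
      have haj : ((j:ℝ) * M * lam i) = (2 * Real.pi) * a j i := by
        rw [ha]; field_simp
      have hcast : (((l - j) * M : ℕ) : ℝ) = (l : ℝ) * M - (j : ℝ) * M := by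
        push_cast [Nat.sub_mul, Nat.cast_sub (Nat.mul_le_mul_right M hjl.le)]
        ring
      have hmain : lam i * (((l - j) * M : ℕ) : ℝ)
          = (2 * Real.pi) * a l i - (2 * Real.pi) * a j i := by
        rw [hcast, ← hal, ← haj]; ring
      have hwdef : w i = 2 * Real.pi * (Int.fract (a l i) - Int.fract (a j i)) := rfl
      have hf1 : Int.fract (a l i) = a l i - ⌊a l i⌋ := rfl
      have hf2 : Int.fract (a j i) = a j i - ⌊a j i⌋ := rfl
      rw [hmain, hwdef, hf1, hf2]
      push_cast
      ring
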